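/- Let n ≥ 2 be an integer and let y : (a,b) → (0,∞) be a C² function satisfying y''(x)/(1+y'(x)²) < (n−1)/y(x) for all x ∈ (a,b). Let a₀ ∈ (a,b) with y'(a₀) = 0. Then for every x ∈ (a,b) such that either x ≥ a₀ and y' ≥ 0 on [a₀,x], or x ≤ a₀ and y' ≤ 0 on [x,a₀], one has 1 + y'(x)² ≤ (y(x)/y(a₀))^{2(n−1)}. -/

import Mathlib

open Set Filter

/-- The integrated gradient bound (following Angenent) used in Case II of the proof of
Corollary 6.2: if `y : (a,b) → (0,∞)` is `C²` with `y''/(1+y'²) < (n-1)/y` (positivity of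
the mean curvature of the generated hypersurface of revolution) and `y'(a₀) = 0`, then at
any `x` reachable from `a₀` through a region where `y'` has the appropriate sign,
`1 + y'(x)² ≤ (y(x)/y(a₀))^{2(n-1)}`. -/
theorem integrated_gradient_bound
    (n : ℕ) (hn : 2 ≤ n) (a b a₀ : ℝ)
    (y y' y'' : ℝ → ℝ)
    (hy_pos : ∀ x ∈ Ioo a b, 0 < y x)
    (hd : ∀ x ∈ Ioo a b, HasDerivAt y (y' x) x)
    (hdd : ∀ x ∈ Ioo a b, HasDerivAt y' (y'' x) x)
    (hdd_cont : ContinuousOn y'' (Ioo a b))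
    (hH : ∀ x ∈ Ioo a b, y'' x / (1 + y' x ^ 2) < ((n : ℝ) - 1) / y x)
    (ha₀ : a₀ ∈ Ioo a b) (hcrit : y' a₀ = 0) :
    ∀ x ∈ Ioo a b,
      ((a₀ ≤ x ∧ ∀ s ∈ Icc a₀ x, 0 ≤ y' s) ∨ (x ≤ a₀ ∧ ∀ s ∈ Icc x a₀, y' s ≤ 0)) →
      1 + y' x ^ 2 ≤ (y x / y a₀) ^ (2 * (n - 1)) := by
  intro x hx hcase
  set c : ℝ := 2 * ((n : ℝ) - 1) with hc
  set F : ℝ → ℝ := fun t => Real.log (1 + y' t ^ 2) - c * Real.log (y t) with hF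
  have hden : ∀ t, (0:ℝ) < 1 + y' t ^ 2 := fun t => by positivity
  -- derivative of F
  have hFd : ∀ t ∈ Ioo a b,
      HasDerivAt F (2 * y' t * (y'' t / (1 + y' t ^ 2) - ((n : ℝ) - 1) / y t)) t := by
    intro t ht
    have h1 : HasDerivAt (fun s => 1 + y' s ^ 2) (2 * y' t * y'' t) t := by
      have := ((hdd t ht).pow 2).const_add 1
      simpa [mul_comm, mul_assoc, mul_left_comm] using this
    have hlog1 : HasDerivAt (fun s => Real.log (1 + y' s ^ 2))
        ((2 * y' t * y'' t) / (1 + y' t ^ 2)) t :=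
      h1.log (ne_of_gt (hden t))
    have hlog2 : HasDerivAt (fun s => Real.log (y s)) (y' t / y t) t :=
      (hd t ht).log (ne_of_gt (hy_pos t ht))
    have := hlog1.sub (hlog2.const_mul c)
    convert this using 1
    case e'_4 => rfl
    case e'_5 => rfl
    case e'_8 => rfl
    rw [hc]; ring
  have hFderiv : ∀ t ∈ Ioo a b,
      deriv F t = 2 * y' t * (y'' t / (1 + y' t ^ 2) - ((n : ℝ) - 1) / y t) :=
    fun t ht => (hFd t ht).deriv
  have hFcont : ContinuousOn F (Ioo a b) :=
    fun t ht => ((hFd t ht).continuousAt).continuousWithinAt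
  -- main inequality F x ≤ F a₀
  have key : F x ≤ F a₀ := by
    rcases hcase with ⟨hax, hsign⟩ | ⟨hxa, hsign⟩
    · -- x ≥ a₀, y' ≥ 0 on Icc a₀ x
      have hsub : Icc a₀ x ⊆ Ioo a b := fun s hs =>
        ⟨lt_of_lt_of_le ha₀.1 hs.1, lt_of_le_of_lt hs.2 hx.2⟩
      have : AntitoneOn F (Icc a₀ x) := by
        apply antitoneOn_of_deriv_nonpos (convex_Icc a₀ x)
          (hFcont.mono hsub)
        · intro t ht
          rw [interior_Icc] at ht
          exact ((hFd t (hsub (Ioo_subset_Icc_self ht))).differentiableAt).differentiableWithinAt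
        · intro t ht
          rw [interior_Icc] at ht
          have htI := hsub (Ioo_subset_Icc_self ht)
          rw [hFderiv t htI]
          have h1 : 0 ≤ 2 * y' t := by
            have := hsign t (Ioo_subset_Icc_self ht); linarith
          have h2 : y'' t / (1 + y' t ^ 2) - ((n : ℝ) - 1) / y t ≤ 0 :=
            sub_nonpos.mpr (le_of_lt (hH t htI))
          exact mul_nonpos_of_nonneg_of_nonpos h1 h2
      exact this (left_mem_Icc.mpr hax) (right_mem_Icc.mpr hax) hax
    · -- x ≤ a₀, y' ≤ 0 on Icc x a₀
      have hsub : Icc x a₀ ⊆ Ioo a b := fun s hs =>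
        ⟨lt_of_lt_of_le hx.1 hs.1, lt_of_le_of_lt hs.2 ha₀.2⟩
      have : MonotoneOn F (Icc x a₀) := by
        apply monotoneOn_of_deriv_nonneg (convex_Icc x a₀)
          (hFcont.mono hsub)
        · intro t ht
          rw [interior_Icc] at ht
          exact ((hFd t (hsub (Ioo_subset_Icc_self ht))).differentiableAt).differentiableWithinAt
        · intro t ht
          rw [interior_Icc] at ht
          have htI := hsub (Ioo_subset_Icc_self ht)
          rw [hFderiv t htI]
          have h1 : 2 * y' t ≤ 0 := by
            have := hsign t (Ioo_subset_Icc_self ht); linarith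
          have h2 : y'' t / (1 + y' t ^ 2) - ((n : ℝ) - 1) / y t ≤ 0 :=
            sub_nonpos.mpr (le_of_lt (hH t htI))
          nlinarith [mul_nonneg (neg_nonneg.mpr h1) (neg_nonneg.mpr h2)]
      exact this (left_mem_Icc.mpr hxa) (right_mem_Icc.mpr hxa) hxa
  -- unfold F and conclude
  have hyx := hy_pos x hx
  have hya := hy_pos a₀ ha₀
  have hFa : F a₀ = - (c * Real.log (y a₀)) := by
    simp [hF, hcrit]
  have hlog : Real.log (1 + y' x ^ 2) ≤ c * Real.log (y x / y a₀) := by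
    have := key
    rw [hFa] at this
    rw [Real.log_div (ne_of_gt hyx) (ne_of_gt hya)]
    simp only [hF] at this
    linarith [this]
  have hcastc : ((2 * (n - 1) : ℕ) : ℝ) = c := by
    have h1 : (1:ℕ) ≤ n := le_trans (by norm_num) hn
    rw [hc]
    push_cast [Nat.cast_sub h1]
    ring
  have hpow : Real.log ((y x / y a₀) ^ (2 * (n - 1))) = c * Real.log (y x / y a₀) := by
    rw [Real.log_pow, hcastc]
  have hrhs_pos : (0:ℝ) < (y x / y a₀) ^ (2 * (n - 1)) := by positivity
  have := hlog
  rw [← hpow] at this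
  exact (Real.log_le_log_iff (hden x) hrhs_pos).mp this
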